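/- For every row index r ∈ {1,…,n−2}, the row sum of the inner array satisfies ∑_{c=1}^{n} G(r,c) = n(n² + 1)/2. -/

import Mathlib

/-- Base array of the singly-even construction on rows `1 ≤ r ≤ n-2`, columns `1 ≤ c ≤ n`:
for `1 ≤ k ≤ n/2 - 1`, if `k` is odd then `B' r k = (k-1)(n-2) + r` and
`B' r (n+1-k) = 2p - k(n-2) + r`; if `k` is even then `B' r k = k(n-2) + 1 - r` and
`B' r (n+1-k) = 2p - (k-1)(n-2) + 1 - r`; and for `k = m = n/2`,
`B' r m = (m-1)(n-2) + r` and `B' r (m+1) = 2p - (m-1)(n-2) + 1 - r`, where `p = n²/2`. -/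
def B' (n r c : ℕ) : ℕ :=
  if c ≤ n / 2 - 1 then
    if Odd c then (c - 1) * (n - 2) + r else c * (n - 2) + 1 - r
  else if c = n / 2 then (n / 2 - 1) * (n - 2) + r
  else if c = n / 2 + 1 then 2 * (n ^ 2 / 2) - (n / 2 - 1) * (n - 2) + 1 - r
  else
    if Odd (n + 1 - c) then 2 * (n ^ 2 / 2) - (n + 1 - c) * (n - 2) + r
    else 2 * (n ^ 2 / 2) - (n + 1 - c - 1) * (n - 2) + 1 - r

/-- The set of rows to be swapped:
`S' = {r : r even, r ≤ (n-2)/2} ∪ {r : r odd, (n-2)/2 < r ≤ n-3}`. -/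
def S' (n r : ℕ) : Prop :=
  (Even r ∧ r ≤ (n - 2) / 2) ∨ (Odd r ∧ (n - 2) / 2 < r ∧ r ≤ n - 3)

instance (n r : ℕ) : Decidable (S' n r) := by unfold S'; infer_instance

/-- The inner array: `G r c = B' r (n+1-c)` if `r ∈ S'`, and `G r c = B' r c` otherwise. -/
def G (n r c : ℕ) : ℕ := if S' n r then B' n r (n + 1 - c) else B' n r c

/-- The first row of the singly-even construction, with `p = n²/2` and `m = n/2`:
`R₁ 1 = p+1`, `R₁ n = p+2`, `R₁ (m+2) = p+n-m`, `R₁ (m+3) = p+n-m-1`;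
for `2 ≤ j ≤ m+1`, `R₁ j = p-n+j-1` if `j` even and `R₁ j = p+n+2-j` if `j` odd;
for `m+4 ≤ j ≤ n-1`, `R₁ j = p-n+j-1` if `j` odd and `R₁ j = p+n+2-j` if `j` even. -/
def R1 (n j : ℕ) : ℕ :=
  if j = 1 then n ^ 2 / 2 + 1
  else if j = n then n ^ 2 / 2 + 2
  else if j = n / 2 + 2 then n ^ 2 / 2 + n - n / 2
  else if j = n / 2 + 3 then n ^ 2 / 2 + n - n / 2 - 1
  else if j ≤ n / 2 + 1 then
    if Even j then n ^ 2 / 2 - n + j - 1 else n ^ 2 / 2 + n + 2 - j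
  else
    if Odd j then n ^ 2 / 2 - n + j - 1 else n ^ 2 / 2 + n + 2 - j

/-- The last row: `Rₙ j = n² + 1 - R₁ j`. -/
def Rn (n j : ℕ) : ℕ := n ^ 2 + 1 - R1 n j

/-- The complete singly-even array: first row `R₁`, last row `Rₙ`,
and `F' r c = G (r-1) c` for `2 ≤ r ≤ n-1`. -/
def F' (n r c : ℕ) : ℕ :=
  if r = 1 then R1 n c else if r = n then Rn n c else G n (r - 1) c

section RowSumAux

lemma sum_reflect_aux (n : ℕ) (f : ℕ → ℕ) :
    ∑ c ∈ Finset.Icc 1 n, f (n + 1 - c) = ∑ c ∈ Finset.Icc 1 n, f c := by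
  refine Finset.sum_nbij' (fun c => n + 1 - c) (fun c => n + 1 - c) ?_ ?_ ?_ ?_ ?_ <;>
    intro a ha <;> simp only [Finset.mem_Icc] at * <;> first
      | omega
      | (congr 1; omega)

lemma pair_sum_aux (f : ℕ → ℕ) (T : ℕ) :
    ∀ s : ℕ, (∀ j, 1 ≤ j → j ≤ s → f (2 * j - 1) + f (2 * j) = T) →
      ∑ k ∈ Finset.Ioc 0 (2 * s), f k = s * T := by
  intro s
  induction s with
  | zero => simp
  | succ s ih =>
    intro h
    have h1 : ∑ k ∈ Finset.Ioc 0 (2 * s), f k + ∑ k ∈ Finset.Ioc (2 * s) (2 * (s + 1)), f k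
        = ∑ k ∈ Finset.Ioc 0 (2 * (s + 1)), f k :=
      Finset.sum_Ioc_consecutive f (by omega) (by omega)
    have h2 : Finset.Ioc (2 * s) (2 * (s + 1)) = {2 * s + 1, 2 * s + 2} := by
      ext x; simp only [Finset.mem_Ioc, Finset.mem_insert, Finset.mem_singleton]; omega
    have h3 : ∑ k ∈ Finset.Ioc (2 * s) (2 * (s + 1)), f k = f (2 * s + 1) + f (2 * s + 2) := by
      rw [h2, Finset.sum_insert (by simp), Finset.sum_singleton]
    have h4 := h (s + 1) (by omega) (by omega)
    have h5 : 2 * (s + 1) - 1 = 2 * s + 1 := by omega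
    have h6 : 2 * (s + 1) = 2 * s + 2 := by omega
    rw [h5, h6] at h4
    rw [← h1, ih (fun j hj1 hj2 => h j hj1 (by omega)), h3, h4]
    ring

end RowSumAux

/-- Every row of the inner array `G` sums to `n(n² + 1)/2`. -/
theorem singly_even_inner_row_sums (n : ℕ) (h2 : n % 4 = 2) (hn : 6 ≤ n) :
    ∀ r ∈ Finset.Icc 1 (n - 2),
      ∑ c ∈ Finset.Icc 1 n, G n r c = n * (n ^ 2 + 1) / 2 := by
  intro r hr
  rw [Finset.mem_Icc] at hr
  obtain ⟨hr1, hr2⟩ := hr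
  obtain ⟨s, hns⟩ : ∃ s, n = 4 * s + 2 := ⟨n / 4, by omega⟩
  obtain ⟨m, hm⟩ : ∃ m, m = n / 2 := ⟨n / 2, rfl⟩
  have hs1 : 1 ≤ s := by omega
  have hm2 : m = 2 * s + 1 := by omega
  obtain ⟨p, hp⟩ : ∃ p, p = n ^ 2 / 2 := ⟨n ^ 2 / 2, rfl⟩
  have hsq : n ^ 2 = 2 * p := by
    have he : n ^ 2 % 2 = 0 := by
      have h0 : n % 2 = 0 := by omega
      simp [Nat.pow_mod, h0]
    omega
  have hnn : n * n = n ^ 2 := by ring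
  have hmn : m * n ≤ n * n := Nat.mul_le_mul_right _ (by omega)
  have hmle : (m - 1) * (n - 2) ≤ 2 * p := by
    have h1 : (m - 1) * (n - 2) ≤ m * n := Nat.mul_le_mul (by omega) (by omega)
    omega
  have hmle2 : (m - 1) * (n - 2) + (n - 2) ≤ 2 * p := by
    have e0 : (m - 1) * (n - 2) + (n - 2) = m * (n - 2) := by
      rw [← Nat.succ_mul]; congr 1; omega
    have h1 : m * (n - 2) ≤ m * n := Nat.mul_le_mul (by omega) (by omega)
    rw [e0]; omega
  -- key: sum of B' over a row
  have key : ∑ c ∈ Finset.Icc 1 n, B' n r c = n * (n ^ 2 + 1) / 2 := by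
    have hicc : Finset.Icc 1 n = Finset.Ioc 0 n := by
      ext x; simp only [Finset.mem_Icc, Finset.mem_Ioc]; omega
    have split1 : ∑ c ∈ Finset.Ioc 0 (m - 1), B' n r c
        + ∑ c ∈ Finset.Ioc (m - 1) (m + 1), B' n r c
        = ∑ c ∈ Finset.Ioc 0 (m + 1), B' n r c :=
      Finset.sum_Ioc_consecutive _ (by omega) (by omega)
    have split2 : ∑ c ∈ Finset.Ioc 0 (m + 1), B' n r c
        + ∑ c ∈ Finset.Ioc (m + 1) n, B' n r c
        = ∑ c ∈ Finset.Ioc 0 n, B' n r c :=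
      Finset.sum_Ioc_consecutive _ (by omega) (by omega)
    -- middle two terms
    have hmid : Finset.Ioc (m - 1) (m + 1) = {m, m + 1} := by
      ext x; simp only [Finset.mem_Ioc, Finset.mem_insert, Finset.mem_singleton]; omega
    have hmidsum : ∑ c ∈ Finset.Ioc (m - 1) (m + 1), B' n r c
        = B' n r m + B' n r (m + 1) := by
      rw [hmid, Finset.sum_insert (by simp), Finset.sum_singleton]
    have hBm : B' n r m = (m - 1) * (n - 2) + r := by
      rw [hm]
      unfold B'
      rw [if_neg (by omega), if_pos rfl]
    have hBm1 : B' n r (m + 1) = 2 * p - (m - 1) * (n - 2) + 1 - r := by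
      rw [hm, hp]
      unfold B'
      rw [if_neg (by omega), if_neg (by omega), if_pos rfl]
    have hmidval : B' n r m + B' n r (m + 1) = 2 * p + 1 := by
      rw [hBm, hBm1]; omega
    -- reflect the top interval
    have hrefl : ∑ c ∈ Finset.Ioc (m + 1) n, B' n r c
        = ∑ c ∈ Finset.Ioc 0 (m - 1), B' n r (n + 1 - c) := by
      refine (Finset.sum_nbij' (fun c => n + 1 - c) (fun c => n + 1 - c) ?_ ?_ ?_ ?_ ?_).symm <;>
        intro a ha <;> simp only [Finset.mem_Ioc] at * <;> first
          | omega
          | (congr 1; omega)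
    have hcomb : ∑ c ∈ Finset.Ioc 0 (m - 1), B' n r c
        + ∑ c ∈ Finset.Ioc 0 (m - 1), B' n r (n + 1 - c)
        = ∑ c ∈ Finset.Ioc 0 (m - 1), (B' n r c + B' n r (n + 1 - c)) :=
      (Finset.sum_add_distrib).symm
    -- pairwise sums
    have hIoc01 : Finset.Ioc 0 (m - 1) = Finset.Ioc 0 (2 * s) := by
      rw [show m - 1 = 2 * s from by omega]
    have hpair : ∑ c ∈ Finset.Ioc 0 (2 * s), (B' n r c + B' n r (n + 1 - c))
        = s * (4 * p + 2) := by
      apply pair_sum_aux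
      intro j hj1 hj2
      have ho : Odd (2 * j - 1) := ⟨j - 1, by omega⟩
      have hb1 : B' n r (2 * j - 1) = (2 * j - 1 - 1) * (n - 2) + r := by
        unfold B'; rw [if_pos (by omega), if_pos ho]
      have hb2 : B' n r (n + 1 - (2 * j - 1)) = 2 * p - (2 * j - 1) * (n - 2) + r := by
        unfold B'
        rw [if_neg (by omega), if_neg (by omega), if_neg (by omega)]
        have he : n + 1 - (n + 1 - (2 * j - 1)) = 2 * j - 1 := by omega
        rw [he, if_pos ho, hp]
      have hb3 : B' n r (2 * j) = 2 * j * (n - 2) + 1 - r := by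
        unfold B'
        rw [if_pos (by omega), if_neg (by simp only [Nat.odd_iff]; omega)]
      have hb4 : B' n r (n + 1 - 2 * j) = 2 * p - (2 * j - 1) * (n - 2) + 1 - r := by
        unfold B'
        rw [if_neg (by omega), if_neg (by omega), if_neg (by omega)]
        have he : n + 1 - (n + 1 - 2 * j) = 2 * j := by omega
        rw [he, if_neg (by simp only [Nat.odd_iff]; omega), hp]
      rw [hb1, hb2, hb3, hb4]
      -- arithmetic on products
      have ea : (2 * j - 1 - 1) * (n - 2) + (n - 2) = (2 * j - 1) * (n - 2) := by
        rw [← Nat.succ_mul]; congr 1; omega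
      have eb : 2 * j * (n - 2) = (2 * j - 1) * (n - 2) + (n - 2) := by
        rw [← Nat.succ_mul]; congr 1; omega
      have hu : (2 * j - 1) * (n - 2) + (n - 2) ≤ 2 * p := by
        have h1 : 2 * j * (n - 2) ≤ (m - 1) * (n - 2) :=
          Nat.mul_le_mul (by omega) (by omega)
        omega
      omega
    -- assemble
    have htot : n * (n ^ 2 + 1) / 2 = s * (4 * p + 2) + (2 * p + 1) := by
      have he : n * (n ^ 2 + 1) = 2 * (s * (4 * p + 2) + (2 * p + 1)) := by
        rw [hsq, hns]; ring
      omega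
    rw [hicc, htot]
    rw [hIoc01] at split1 hrefl hcomb
    omega
  -- now handle G
  by_cases hS : S' n r
  · simp only [G, if_pos hS]
    rw [sum_reflect_aux n (fun c => B' n r c), key]
  · simp only [G, if_neg hS, key]
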